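/- Let p > q ≥ 1 be coprime integers and take c = 0, so the correspondence is f₀ : z ↦ {w : w^q = z^p}. Then the Julia set J₀, defined as the closure of the union of all repelling cycles of f₀, is exactly the unit circle {z ∈ ℂ : |z| = 1}. -/

import Mathlib

open Finset

/-- `z 0, …, z (n−1)` is a cycle of length `n ≥ 1` of the correspondence
`f_c(z) = z^{p/q} + c`: `(z_{(i+1) mod n} − c)^q = z_i^p` for all `i < n`. -/
def IsCycle (p q : ℕ) (c : ℂ) (n : ℕ) (z : ℕ → ℂ) : Prop :=
  1 ≤ n ∧ ∀ i < n, (z ((i + 1) % n) - c) ^ q = (z i) ^ p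

/-- The multiplier of a cycle: `∏ p·z_i^{p−1}/(q·(z_{(i+1) mod n} − c)^{q−1})`
if no point of the cycle is `0`, and `0` if the cycle contains `0`. -/
noncomputable def cycleMultiplier (p q : ℕ) (c : ℂ) (n : ℕ) (z : ℕ → ℂ) : ℂ :=
  if ∀ i < n, z i ≠ 0 then
    ∏ i ∈ Finset.range n, (p * (z i) ^ (p - 1)) / (q * (z ((i + 1) % n) - c) ^ (q - 1))
  else 0

/-- The Julia set `J_c`: the closure of the union of all repelling cycles. -/
noncomputable def juliaSet (p q : ℕ) (c : ℂ) : Set ℂ :=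
  closure {w | ∃ (n : ℕ) (z : ℕ → ℂ) (i : ℕ), IsCycle p q c n z ∧
    1 < ‖cycleMultiplier p q c n z‖ ∧ i < n ∧ w = z i}

/-- Points of a zero-free cycle (for `c = 0`) lie on the unit circle. -/
lemma cycle_abs_one (p q : ℕ) (hq : 1 ≤ q) (hpq : q < p) (n : ℕ) (z : ℕ → ℂ)
    (hc : IsCycle p q 0 n z) (h0 : ∀ i < n, z i ≠ 0) :
    ∀ i < n, ‖z i‖ = 1 := by
  obtain ⟨hn, hz⟩ := hc
  set L : ℕ → ℝ := fun i => |Real.log ‖z i‖| with hL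
  have key : ∀ i < n, (q : ℝ) * L ((i + 1) % n) = p * L i := by
    intro i hi
    have h1 : ‖z ((i + 1) % n)‖ ^ q = ‖z i‖ ^ p := by
      have := hz i hi
      rw [sub_zero] at this
      calc ‖z ((i + 1) % n)‖ ^ q = ‖(z ((i + 1) % n)) ^ q‖ := by
            rw [norm_pow]
        _ = ‖(z i) ^ p‖ := by rw [this]
        _ = ‖z i‖ ^ p := by rw [norm_pow]
    have h2 : (q : ℝ) * Real.log ‖z ((i + 1) % n)‖ =
        p * Real.log ‖z i‖ := by
      rw [← Real.log_pow, ← Real.log_pow, h1]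
    have := congrArg (|·|) h2
    simpa [hL, abs_mul, Nat.abs_cast, mul_comm] using this
  have hmax : ∃ i ∈ Finset.range n, ∀ j ∈ Finset.range n, L j ≤ L i :=
    Finset.exists_max_image _ L ⟨0, Finset.mem_range.mpr hn⟩
  obtain ⟨i0, hi0, hmax⟩ := hmax
  rw [Finset.mem_range] at hi0
  have hj : (i0 + 1) % n < n := Nat.mod_lt _ hn
  have h1 : (q : ℝ) * L ((i0 + 1) % n) = p * L i0 := key i0 hi0
  have h2 : L ((i0 + 1) % n) ≤ L i0 := hmax _ (Finset.mem_range.mpr hj)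
  have hLi0 : L i0 ≤ 0 := by
    nlinarith [abs_nonneg (Real.log ‖z i0‖),
      (by exact_mod_cast hpq : (q : ℝ) < p), (by positivity : (0:ℝ) < q)]
  intro i hi
  have hle : L i ≤ 0 := le_trans (hmax i (Finset.mem_range.mpr hi)) hLi0
  have hL0 : Real.log ‖z i‖ = 0 :=
    abs_eq_zero.mp (le_antisymm hle (abs_nonneg _))
  rcases Real.log_eq_zero.mp hL0 with h | h | h
  · exact absurd (norm_eq_zero.mp h) (h0 i hi)
  · exact h
  · have := norm_nonneg (z i); rw [h] at this; linarith

/-- Every `(p^n - q^n)`-th root of unity is a point of a repelling cycle. -/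
lemma root_mem (p q : ℕ) (hq : 1 ≤ q) (hpq : q < p) (hcop : Nat.Coprime p q)
    (n : ℕ) (hn : 1 ≤ n) (u : ℂ) (hu : u ^ (p ^ n - q ^ n) = 1) :
    ∃ (m : ℕ) (z : ℕ → ℂ) (i : ℕ), IsCycle p q 0 m z ∧
      1 < ‖cycleMultiplier p q 0 m z‖ ∧ i < m ∧ u = z i := by
  set M : ℕ := p ^ n - q ^ n with hM
  have hqp : q ^ n < p ^ n := Nat.pow_lt_pow_left hpq (by omega)
  have hM1 : 1 ≤ M := by omega
  have hu0 : u ≠ 0 := by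
    intro h; rw [h, zero_pow (by omega)] at hu; exact one_ne_zero hu.symm
  have huZ : u ^ (M : ℤ) = 1 := by rw [zpow_natCast]; exact hu
  have habsu : ‖u‖ = 1 := by
    have h1 : ‖u‖ ^ M = 1 := by rw [← norm_pow, hu, norm_one]
    rcases lt_trichotomy ‖u‖ 1 with h | h | h
    · exfalso
      have := pow_lt_one₀ (norm_nonneg u) h (by omega : M ≠ 0)
      rw [h1] at this; exact lt_irrefl 1 this
    · exact h
    · exfalso
      have := one_lt_pow₀ h (by omega : M ≠ 0)
      rw [h1] at this; exact lt_irrefl 1 this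
  have hcop' : IsCoprime ((q : ℤ) ^ n) ((p : ℤ) ^ n - (q : ℤ) ^ n) := by
    have h1 : IsCoprime ((q : ℤ) ^ n) ((p : ℤ) ^ n) := by
      rw [Int.isCoprime_iff_gcd_eq_one]
      exact_mod_cast Nat.Coprime.pow n n hcop.symm
    have := h1.add_mul_left_right (-1)
    simpa [mul_neg_one, ← sub_eq_add_neg] using this
  obtain ⟨s, t, hst⟩ := hcop'
  have hMZ : ((M : ℤ)) = (p : ℤ) ^ n - (q : ℤ) ^ n := by
    push_cast [hM, Nat.cast_sub (le_of_lt hqp)]; ring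
  set z : ℕ → ℂ := fun i => u ^ ((p : ℤ) ^ i * (q : ℤ) ^ (n - i) * s) with hzdef
  have hz0 : z 0 = u := by
    have he : (p : ℤ) ^ 0 * (q : ℤ) ^ (n - 0) * s = 1 - (M : ℤ) * t := by
      rw [hMZ, pow_zero, one_mul, Nat.sub_zero]
      linear_combination hst
    rw [hzdef]
    simp only
    rw [he, zpow_sub₀ hu0, zpow_one, zpow_mul, huZ, one_zpow, div_one]
  have hzne : ∀ i, z i ≠ 0 := fun i => zpow_ne_zero _ hu0
  have habsz : ∀ i, ‖z i‖ = 1 := by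
    intro i
    rw [hzdef]
    simp only
    rw [norm_zpow, habsu, one_zpow]
  have hcyc : IsCycle p q 0 n z := by
    refine ⟨hn, fun i hi => ?_⟩
    rw [sub_zero, hzdef]
    simp only
    rw [← zpow_natCast (u ^ _) q, ← zpow_natCast (u ^ _) p, ← zpow_mul, ← zpow_mul]
    rcases Nat.lt_or_ge (i + 1) n with h | h
    · rw [Nat.mod_eq_of_lt h]
      congr 1
      have hsub : n - i = (n - (i + 1)) + 1 := by omega
      rw [hsub]
      push_cast
      ring
    · have hin : i = n - 1 := by omega
      have hmod : (i + 1) % n = 0 := by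
        have h1 : i + 1 = n := by omega
        simp [h1]
      rw [hmod]
      have hni : n - i = 1 := by omega
      have hpp : (p : ℤ) ^ (n - 1) * (p : ℤ) = (p : ℤ) ^ n := by
        rw [← pow_succ]; congr 1; omega
      have hexp : (p : ℤ) ^ i * (q : ℤ) ^ (n - i) * s * (p : ℤ) =
          (p : ℤ) ^ 0 * (q : ℤ) ^ (n - 0) * s * (q : ℤ) + (M : ℤ) * ((q : ℤ) * s) := by
        rw [hMZ, hni, hin, pow_zero, one_mul, Nat.sub_zero]
        linear_combination ((q : ℤ) * s) * hpp
      have h1 : u ^ ((M:ℤ) * ((q:ℤ) * s)) = 1 := by rw [zpow_mul, huZ, one_zpow]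
      rw [hexp, zpow_add₀ hu0, h1, mul_one]
  refine ⟨n, z, 0, hcyc, ?_, hn, hz0.symm⟩
  have hif : ∀ i < n, z i ≠ 0 := fun i _ => hzne i
  rw [cycleMultiplier, if_pos hif, norm_prod]
  have hterm : ∀ i ∈ Finset.range n,
      ‖(p : ℂ) * (z i) ^ (p - 1) / ((q : ℂ) * (z ((i + 1) % n) - 0) ^ (q - 1))‖
        = (p : ℝ) / q := by
    intro i _
    rw [sub_zero, norm_div, norm_mul, norm_mul, norm_pow, norm_pow, habsz, habsz,
      one_pow, one_pow, mul_one, mul_one, Complex.norm_natCast, Complex.norm_natCast]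
  rw [Finset.prod_congr rfl hterm, Finset.prod_const, Finset.card_range]
  have h1 : (1 : ℝ) < (p : ℝ) / q := by
    rw [lt_div_iff₀ (by positivity : (0:ℝ) < q), one_mul]
    exact_mod_cast hpq
  exact lt_of_lt_of_le h1 (le_self_pow₀ h1.le (by omega))

lemma pow_sub_ge (p q : ℕ) (hq : 1 ≤ q) (hpq : q < p) : ∀ n, q ^ n + n ≤ p ^ n := by
  intro n
  induction n with
  | zero => simp
  | succ k ih =>
    have h1 : 1 ≤ q ^ k := Nat.one_le_pow _ _ (by omega)
    have h2 : q ^ k ≤ p ^ k := Nat.pow_le_pow_left (le_of_lt hpq) k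
    calc q ^ (k + 1) + (k + 1) = q ^ k * q + (k + 1) := by ring
      _ ≤ p ^ k * q + p ^ k := by
          have hA : q ^ k * q ≤ p ^ k * q := Nat.mul_le_mul_right q h2
          have hB : k + 1 ≤ p ^ k := by omega
          omega
      _ = p ^ k * (q + 1) := by ring
      _ ≤ p ^ k * p := Nat.mul_le_mul_left _ hpq
      _ = p ^ (k + 1) := (pow_succ p k).symm

/-- For coprime `p > q ≥ 1`, the Julia set of `f₀ : z ↦ {w : w^q = z^p}` is
exactly the unit circle. -/
theorem julia_at_zero_is_circle (p q : ℕ) (hq : 1 ≤ q) (hpq : q < p)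
    (hcop : Nat.Coprime p q) :
    juliaSet p q 0 = {z : ℂ | ‖z‖ = 1} := by
  apply Set.Subset.antisymm
  · -- Julia set ⊆ circle
    apply closure_minimal
    · rintro w ⟨n, z, i, hcyc, hmul, hi, rfl⟩
      have h0 : ∀ j < n, z j ≠ 0 := by
        by_contra h
        rw [cycleMultiplier, if_neg h, norm_zero] at hmul
        linarith
      exact cycle_abs_one p q hq hpq n z hcyc h0 i hi
    · exact isClosed_eq continuous_norm continuous_const
  · -- circle ⊆ Julia set
    intro w hw
    rw [juliaSet, Metric.mem_closure_iff]
    intro ε hε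
    have hπ : (0:ℝ) < Real.pi := Real.pi_pos
    set n : ℕ := ⌈2 * Real.pi / ε⌉₊ + 4 with hn
    set M : ℕ := p ^ n - q ^ n with hMdef
    have hqp : q ^ n < p ^ n := Nat.pow_lt_pow_left hpq (by omega)
    have hnM : n ≤ M := by
      have := pow_sub_ge p q hq hpq n
      omega
    have hMR : (2 * Real.pi / ε) < M := by
      have h1 : (2 * Real.pi / ε) ≤ ⌈2 * Real.pi / ε⌉₊ := Nat.le_ceil _
      have h2 : (n : ℝ) ≤ M := by exact_mod_cast hnM
      have h3 : ((⌈2 * Real.pi / ε⌉₊ : ℝ)) + 4 = (n : ℝ) := by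
        rw [hn]; push_cast; ring
      linarith
    have hM0 : (0:ℝ) < M := lt_of_le_of_lt (by positivity) hMR
    have hM4 : (4:ℝ) ≤ M := by
      have : (4:ℕ) ≤ n := by omega
      have h2 : (n : ℝ) ≤ M := by exact_mod_cast hnM
      have : (4:ℝ) ≤ n := by exact_mod_cast this
      linarith
    set θ : ℝ := Complex.arg w with hθ
    set k : ℤ := round (θ * M / (2 * Real.pi)) with hk
    set φ : ℝ := 2 * Real.pi * k / M with hφ
    set u : ℂ := Complex.exp (φ * Complex.I) with hu
    -- u is an M-th root of unity
    have huM : u ^ M = 1 := by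
      rw [hu, ← Complex.exp_nat_mul]
      have hMC : (M : ℂ) ≠ 0 := by
        exact_mod_cast hM0.ne'
      have : (M : ℂ) * (φ * Complex.I) = (k : ℂ) * (2 * Real.pi * Complex.I) := by
        rw [hφ]
        push_cast
        field_simp
      rw [this, Complex.exp_int_mul_two_pi_mul_I]
    -- u is a repelling cycle point
    have humem := root_mem p q hq hpq hcop n (by omega) u huM
    refine ⟨u, humem, ?_⟩
    -- distance estimate
    have hwu : w = Complex.exp (θ * Complex.I) := by
      have := Complex.norm_mul_exp_arg_mul_I w
      rw [Set.mem_setOf_eq] at hw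
      rw [hw] at this
      simpa using this.symm
    have hdiff : |θ - φ| ≤ Real.pi / M := by
      have h1 : |θ * M / (2 * Real.pi) - k| ≤ 1 / 2 := abs_sub_round _
      have h2 : θ - φ = (2 * Real.pi / M) * (θ * M / (2 * Real.pi) - k) := by
        rw [hφ]; field_simp
      rw [h2, abs_mul, abs_of_pos (by positivity : (0:ℝ) < 2 * Real.pi / M)]
      calc 2 * Real.pi / M * |θ * M / (2 * Real.pi) - k| ≤ 2 * Real.pi / M * (1/2) := by
            apply mul_le_mul_of_nonneg_left h1 (by positivity)
        _ = Real.pi / M := by ring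
    have hdist : dist w u < ε := by
      rw [Complex.dist_eq, hwu, hu]
      have hsplit : Complex.exp (θ * Complex.I) - Complex.exp (φ * Complex.I) =
          Complex.exp (φ * Complex.I) * (Complex.exp ((↑(θ - φ)) * Complex.I) - 1) := by
        rw [mul_sub, ← Complex.exp_add, mul_one]
        congr 2
        push_cast
        ring
      rw [hsplit, norm_mul]
      have habsφ : ‖Complex.exp (φ * Complex.I)‖ = 1 := by
        rw [Complex.norm_exp]
        simp
      rw [habsφ, one_mul]
      have habsx : ‖(↑(θ - φ)) * Complex.I‖ = |θ - φ| := by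
        rw [norm_mul, Complex.norm_I, mul_one, Complex.norm_real, Real.norm_eq_abs]
      have hle1 : ‖(↑(θ - φ)) * Complex.I‖ ≤ 1 := by
        rw [habsx]
        have hπ4 : Real.pi ≤ 4 := Real.pi_le_four
        have : Real.pi / M ≤ 1 := by
          rw [div_le_one hM0]; linarith
        linarith [hdiff]
      have := Complex.norm_exp_sub_one_le hle1
      rw [habsx] at this
      have hfin : 2 * |θ - φ| < ε := by
        have h2 : 2 * |θ - φ| ≤ 2 * Real.pi / M := by
          calc 2 * |θ - φ| ≤ 2 * (Real.pi / M) := by linarith [hdiff]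
            _ = 2 * Real.pi / M := by ring
        have h3 : 2 * Real.pi / M < ε := by
          rw [div_lt_iff₀ hM0]
          have := (div_lt_iff₀ hε).mp hMR
          linarith
        linarith
      calc ‖Complex.exp ((↑(θ - φ)) * Complex.I) - 1‖ ≤ 2 * |θ - φ| := this
        _ < ε := hfin
    exact hdist
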